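/- Let A ∈ [2,3), θ = (A−1)/2. There exists a constant C₀ such that for −2 < μ < 1, |I_A(μ) − C₀ ln|1+μ|| is bounded uniformly; in particular I_A(μ) = O(|ln|1+μ|| + 1) on (−2,1). -/

import Mathlib

open Real MeasureTheory Set intervalIntegral

-- integrability of (x - c)^p on Ioo a b, c ≤ a, -1 < p
lemma intOn_rpow_sub {c a b p : ℝ} (hca : c ≤ a) (hab : a ≤ b) (hp : -1 < p) :
    IntegrableOn (fun x => (x - c) ^ p) (Ioo a b) := by
  have h := (intervalIntegrable_rpow' (a := a - c) (b := b - c) hp).comp_sub_right c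
  rw [sub_add_cancel, sub_add_cancel] at h
  exact (intervalIntegrable_iff_integrableOn_Ioo_of_le hab).mp h

lemma int_rpow_sub {c a b p : ℝ} (hab : a ≤ b) (hp : -1 < p) :
    ∫ x in Ioo a b, (x - c) ^ p = ((b - c) ^ (p + 1) - (a - c) ^ (p + 1)) / (p + 1) := by
  rw [← integral_Ioc_eq_integral_Ioo, ← integral_of_le hab,
    integral_comp_sub_right (fun x => x ^ p) c,
    integral_rpow (Or.inl hp)]

-- mirrored: (d - x)^p on Ioo a b, b ≤ d
lemma intOn_rpow_sub' {d a b p : ℝ} (hab : a ≤ b) (hbd : b ≤ d) (hp : -1 < p) :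
    IntegrableOn (fun x => (d - x) ^ p) (Ioo a b) := by
  have h := (intervalIntegrable_rpow' (a := d - b) (b := d - a) hp).comp_sub_left d
  rw [sub_sub_cancel, sub_sub_cancel] at h
  exact (intervalIntegrable_iff_integrableOn_Ioo_of_le hab).mp h.symm

lemma int_rpow_sub' {d a b p : ℝ} (hab : a ≤ b) (hp : -1 < p) :
    ∫ x in Ioo a b, (d - x) ^ p = ((d - a) ^ (p + 1) - (d - b) ^ (p + 1)) / (p + 1) := by
  rw [← integral_Ioc_eq_integral_Ioo, ← integral_of_le hab,
    integral_comp_sub_left (fun x => x ^ p) d,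
    integral_rpow (Or.inl hp)]

lemma intOn_inv_sub {c a b : ℝ} (hca : c < a) (hab : a ≤ b) :
    IntegrableOn (fun x => (x - c)⁻¹) (Ioo a b) := by
  apply (ContinuousOn.integrableOn_Icc ?_).mono_set Ioo_subset_Icc_self
  apply ContinuousOn.inv₀ (by fun_prop)
  intro x hx
  have : c < x := lt_of_lt_of_le hca hx.1
  exact ne_of_gt (by linarith)

lemma int_inv_sub {c a b : ℝ} (hca : c < a) (hab : a ≤ b) :
    ∫ x in Ioo a b, (x - c)⁻¹ = Real.log (b - c) - Real.log (a - c) := by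
  rw [← integral_Ioc_eq_integral_Ioo, ← integral_of_le hab,
    integral_comp_sub_right (fun x => x⁻¹) c,
    integral_inv (by
      rw [Set.uIcc_of_le (by linarith)]
      intro h
      have := h.1; linarith)]
  rw [Real.log_div (by linarith) (by linarith)]

lemma intOn_invsq_sub {c a b : ℝ} (hca : c < a) (hab : a ≤ b) :
    IntegrableOn (fun x => (x - c) ^ (-2 : ℝ)) (Ioo a b) := by
  apply (ContinuousOn.integrableOn_Icc ?_).mono_set Ioo_subset_Icc_self
  apply ContinuousOn.rpow_const (by fun_prop)
  intro x hx
  have : c < x := lt_of_lt_of_le hca hx.1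
  exact Or.inl (ne_of_gt (by linarith))

lemma int_invsq_sub {c a b : ℝ} (hca : c < a) (hab : a ≤ b) :
    ∫ x in Ioo a b, (x - c) ^ (-2 : ℝ) = (a - c)⁻¹ - (b - c)⁻¹ := by
  rw [← integral_Ioc_eq_integral_Ioo, ← integral_of_le hab,
    integral_comp_sub_right (fun x => x ^ (-2 : ℝ)) c,
    integral_rpow (Or.inr ⟨by norm_num, by
      rw [Set.uIcc_of_le (by linarith)]
      intro h
      have := h.1; linarith⟩)]
  norm_num
  rw [Real.rpow_neg_one, Real.rpow_neg_one]
  ring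

-- splitting
lemma int_split {f : ℝ → ℝ} {a b c : ℝ} (hab : a ≤ b) (hbc : b ≤ c)
    (h1 : IntegrableOn f (Ioo a b)) (h2 : IntegrableOn f (Ioo b c)) :
    IntegrableOn f (Ioo a c) ∧
      ∫ x in Ioo a c, f x = (∫ x in Ioo a b, f x) + ∫ x in Ioo b c, f x := by
  have h1' : IntegrableOn f (Ioc a b) := (integrableOn_Ioc_iff_integrableOn_Ioo enorm_ne_top).2 h1
  have h2' : IntegrableOn f (Ioc b c) := (integrableOn_Ioc_iff_integrableOn_Ioo enorm_ne_top).2 h2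
  have hu : Ioc a c = Ioc a b ∪ Ioc b c := (Ioc_union_Ioc_eq_Ioc hab hbc).symm
  constructor
  · have : IntegrableOn f (Ioc a c) := by rw [hu]; exact h1'.union h2'
    exact this.mono_set Ioo_subset_Ioc_self
  · rw [← integral_Ioc_eq_integral_Ioo, hu,
      setIntegral_union (Ioc_disjoint_Ioc_of_le le_rfl) measurableSet_Ioc h1' h2',
      integral_Ioc_eq_integral_Ioo, integral_Ioc_eq_integral_Ioo]

lemma expand_sq {l : ℝ} (h1 : -1 ≤ l) (h2 : l ≤ 1) (p : ℝ) :
    (1 - l ^ 2) ^ p = (1 - l) ^ p * (1 + l) ^ p := by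
  rw [show (1 : ℝ) - l ^ 2 = (1 - l) * (1 + l) by ring,
    Real.mul_rpow (by linarith) (by linarith)]

lemma chord {x θ : ℝ} (hθ1 : 0 ≤ θ) (hθ2 : θ ≤ 1) (h1 : 1 ≤ x) (h2 : x ≤ 2) :
    |x ^ (θ - 1) - 2 ^ (θ - 1)| ≤ 2 - x := by
  have hx0 : (0 : ℝ) < x := by linarith
  have hkey : x ^ (θ - 1) * (x / 2) ≤ (2 : ℝ) ^ (θ - 1) := by
    have e1 : (2 : ℝ) ^ (θ - 1) = x ^ (θ - 1) * (2 / x) ^ (θ - 1) := by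
      rw [← Real.mul_rpow (le_of_lt hx0) (by positivity)]
      rw [mul_div_cancel₀ _ (ne_of_gt hx0)]
    have e2 : (2 / x : ℝ) ^ (θ - 1) = (x / 2) ^ (1 - θ) := by
      rw [show (2 / x : ℝ) = (x / 2)⁻¹ by field_simp,
        Real.inv_rpow (by positivity), ← Real.rpow_neg (by positivity),
        show -(θ - 1) = 1 - θ by ring]
    have e3 : x / 2 ≤ (x / 2 : ℝ) ^ (1 - θ) := by
      nth_rewrite 1 [← Real.rpow_one (x / 2)]
      exact Real.rpow_le_rpow_of_exponent_ge (by linarith) (by linarith) (by linarith)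
    rw [e1, e2]
    exact mul_le_mul_of_nonneg_left e3 (Real.rpow_nonneg (le_of_lt hx0) _)
  have hle1 : x ^ (θ - 1) ≤ 1 := Real.rpow_le_one_of_one_le_of_nonpos h1 (by linarith)
  have hanti : (2 : ℝ) ^ (θ - 1) ≤ x ^ (θ - 1) :=
    Real.rpow_le_rpow_of_nonpos hx0 h2 (by linarith)
  rw [abs_le]
  constructor
  · linarith
  · nlinarith [Real.rpow_nonneg (le_of_lt hx0) (θ - 1)]

-- ratio bound : for v > 0 and v ≤ u, (u/v)^θ ≤ u/v when θ ≤ 1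
lemma ratio_pow_le {u v θ : ℝ} (hθ1 : 0 ≤ θ) (hθ2 : θ ≤ 1) (hv : 0 < v) (huv : v ≤ u) :
    (u / v) ^ θ ≤ u / v := by
  have h1 : (1 : ℝ) ≤ u / v := (one_le_div hv).2 huv
  nth_rewrite 2 [← Real.rpow_one (u / v)]
  exact Real.rpow_le_rpow_of_exponent_le h1 hθ2
-- integrability of f on left piece (singularity at l = μ), -1 < μ ≤ m < 1
lemma If_left {θ μ m : ℝ} (hθ2 : θ < 1) (hμ : -1 < μ) (hm : μ ≤ m) (hm1 : m < 1) :
    IntegrableOn (fun l => (l - μ) ^ (-θ) * (1 - l ^ 2) ^ (θ - 1)) (Ioo μ m) := by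
  have hi : IntervalIntegrable (fun l => (l - μ) ^ (-θ)) volume μ m := by
    have h := (intervalIntegrable_rpow' (a := μ - μ) (b := m - μ) (by linarith : (-1:ℝ) < -θ)).comp_sub_right μ
    rwa [sub_add_cancel, sub_add_cancel] at h
  have hc : ContinuousOn (fun l : ℝ => (1 - l ^ 2) ^ (θ - 1)) (uIcc μ m) := by
    apply ContinuousOn.rpow_const (by fun_prop)
    rw [uIcc_of_le hm]
    intro x hx
    have h1 := hx.1; have h2 := hx.2
    exact Or.inl (by nlinarith)
  exact (intervalIntegrable_iff_integrableOn_Ioo_of_le hm).mp (hi.mul_continuousOn hc)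

-- integrability of f on right piece (singularity at l = 1), μ < m, -1 < m
lemma If_right {θ μ m : ℝ} (hθ1 : 0 < θ) (hμ : μ < m) (hm : -1 < m) (hm1 : m ≤ 1) :
    IntegrableOn (fun l => (l - μ) ^ (-θ) * (1 - l ^ 2) ^ (θ - 1)) (Ioo m 1) := by
  have hi : IntervalIntegrable (fun l => (1 - l) ^ (θ - 1)) volume m 1 := by
    have h := (intervalIntegrable_rpow' (a := 1 - 1) (b := 1 - m) (by linarith : (-1:ℝ) < θ - 1)).comp_sub_left 1
    rw [sub_sub_cancel, sub_sub_cancel] at h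
    exact h.symm
  have hc : ContinuousOn (fun l : ℝ => (l - μ) ^ (-θ) * (1 + l) ^ (θ - 1)) (uIcc m 1) := by
    rw [uIcc_of_le hm1]
    apply ContinuousOn.mul
    · apply ContinuousOn.rpow_const (by fun_prop)
      intro x hx
      exact Or.inl (by have := hx.1; exact ne_of_gt (by linarith))
    · apply ContinuousOn.rpow_const (by fun_prop)
      intro x hx
      exact Or.inl (by have := hx.1; exact ne_of_gt (by linarith))
  have hg : IntegrableOn
      (fun l => (1 - l) ^ (θ - 1) * ((l - μ) ^ (-θ) * (1 + l) ^ (θ - 1))) (Ioo m 1) :=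
    (intervalIntegrable_iff_integrableOn_Ioo_of_le hm1).mp (hi.mul_continuousOn hc)
  apply hg.congr_fun ?_ measurableSet_Ioo
  intro l hl
  have h1 := hl.1; have h2 := hl.2
  simp only []
  rw [expand_sq (by linarith) (by linarith)]
  ring

-- integrability of f on middle-left piece (singularity at l = -1), μ < -1
lemma If_midL {θ μ m : ℝ} (hθ1 : 0 < θ) (hμ : μ < -1) (hm : -1 ≤ m) (hm1 : m < 1) :
    IntegrableOn (fun l => (l - μ) ^ (-θ) * (1 - l ^ 2) ^ (θ - 1)) (Ioo (-1) m) := by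
  have hi : IntervalIntegrable (fun l => (1 + l) ^ (θ - 1)) volume (-1) m := by
    have h := (intervalIntegrable_rpow' (a := -1 - (-1 : ℝ)) (b := m - (-1)) (by linarith : (-1:ℝ) < θ - 1)).comp_sub_right (-1)
    rw [sub_add_cancel, sub_add_cancel] at h
    have : (fun l : ℝ => (1 + l) ^ (θ - 1)) = fun x : ℝ => (x - (-1)) ^ (θ - 1) := by
      funext x; rw [show x - (-1) = 1 + x by ring]
    rw [this]; exact h
  have hc : ContinuousOn (fun l : ℝ => (l - μ) ^ (-θ) * (1 - l) ^ (θ - 1)) (uIcc (-1) m) := by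
    rw [uIcc_of_le hm]
    apply ContinuousOn.mul
    · apply ContinuousOn.rpow_const (by fun_prop)
      intro x hx
      exact Or.inl (by have := hx.1; exact ne_of_gt (by linarith))
    · apply ContinuousOn.rpow_const (by fun_prop)
      intro x hx
      exact Or.inl (by have := hx.2; exact ne_of_gt (by linarith))
  have hg : IntegrableOn
      (fun l => (1 + l) ^ (θ - 1) * ((l - μ) ^ (-θ) * (1 - l) ^ (θ - 1))) (Ioo (-1) m) :=
    (intervalIntegrable_iff_integrableOn_Ioo_of_le hm).mp (hi.mul_continuousOn hc)
  apply hg.congr_fun ?_ measurableSet_Ioo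
  intro l hl
  have h1 := hl.1; have h2 := hl.2
  simp only []
  rw [expand_sq (by linarith) (by linarith)]
  ring
-- Case 1 : -1/2 ≤ μ < 1
lemma case1 {θ μ : ℝ} (hθ1 : 1/2 ≤ θ) (hθ2 : θ < 1) (h1 : -(1/2) ≤ μ) (h2 : μ < 1) :
    abs ((∫ l in Ioo μ 1, (l - μ) ^ (-θ) * (1 - l ^ 2) ^ (θ - 1)) +
        2 ^ (θ - 1) * Real.log (|1 + μ|)) ≤ 2 / (1 - θ) + 1 / θ + Real.log 2 := by
  have hθ0 : 0 < θ := by linarith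
  have hθ1' : 0 < 1 - θ := by linarith
  set d : ℝ := (1 - μ) / 2 with hd
  set m : ℝ := (μ + 1) / 2 with hm
  have hd0 : 0 < d := by rw [hd]; linarith
  have hμm : μ < m := by rw [hm]; linarith
  have hm1 : m < 1 := by rw [hm]; linarith
  have hμ1 : -1 < μ := by linarith
  have Ifl := If_left (θ := θ) (μ := μ) (m := m) hθ2 hμ1 hμm.le hm1
  have Ifr := If_right (θ := θ) (μ := μ) (m := m) hθ0 hμm (by rw [hm]; linarith) hm1.le
  obtain ⟨Ifull, hsum⟩ := int_split hμm.le hm1.le Ifl Ifr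
  -- bound on the left piece
  have key1 : ∫ l in Ioo μ m, (l - μ) ^ (-θ) * (1 - l ^ 2) ^ (θ - 1) ≤ 2 / (1 - θ) := by
    have hb : IntegrableOn (fun l => 2 * d ^ (θ - 1) * (l - μ) ^ (-θ)) (Ioo μ m) :=
      (intOn_rpow_sub le_rfl hμm.le (by linarith)).const_mul _
    have hmono := setIntegral_mono_on Ifl hb measurableSet_Ioo ?_
    · calc ∫ l in Ioo μ m, (l - μ) ^ (-θ) * (1 - l ^ 2) ^ (θ - 1)
          ≤ ∫ l in Ioo μ m, 2 * d ^ (θ - 1) * (l - μ) ^ (-θ) := hmono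
        _ = 2 * d ^ (θ - 1) * ∫ l in Ioo μ m, (l - μ) ^ (-θ) := MeasureTheory.integral_const_mul _ _
        _ = 2 * d ^ (θ - 1) * (((m - μ) ^ (-θ + 1) - (μ - μ) ^ (-θ + 1)) / (-θ + 1)) := by
            rw [int_rpow_sub hμm.le (by linarith)]
        _ = 2 / (1 - θ) := by
            rw [show m - μ = d by rw [hm, hd]; ring, sub_self,
              Real.zero_rpow (by linarith), sub_zero,
              show (2 : ℝ) * d ^ (θ - 1) * (d ^ (-θ + 1) / (-θ + 1)) =
                2 * (d ^ (θ - 1) * d ^ (-θ + 1)) / (-θ + 1) by ring,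
              ← Real.rpow_add hd0, show θ - 1 + (-θ + 1) = 0 by ring, Real.rpow_zero]
            ring
    · intro l hl
      have hl1 := hl.1; have hl2 := hl.2
      have e1 : (1 - l) ^ (θ - 1) ≤ d ^ (θ - 1) :=
        Real.rpow_le_rpow_of_nonpos hd0 (by rw [hd, hm] at *; linarith) (by linarith)
      have e2 : (1 + l) ^ (θ - 1) ≤ 2 := by
        have : (1 + l : ℝ) ^ (θ - 1) ≤ (1/2 : ℝ) ^ (θ - 1) :=
          Real.rpow_le_rpow_of_nonpos (by norm_num) (by linarith) (by linarith)
        apply this.trans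
        have : ((1:ℝ)/2) ^ (θ - 1) ≤ ((1:ℝ)/2) ^ (-1 : ℝ) :=
          Real.rpow_le_rpow_of_exponent_ge (by norm_num) (by norm_num) (by linarith)
        apply this.trans
        rw [Real.rpow_neg_one]; norm_num
      calc (l - μ) ^ (-θ) * (1 - l ^ 2) ^ (θ - 1)
          = (l - μ) ^ (-θ) * ((1 - l) ^ (θ - 1) * (1 + l) ^ (θ - 1)) := by
            rw [expand_sq (by linarith) (by linarith)]
        _ ≤ (l - μ) ^ (-θ) * (d ^ (θ - 1) * 2) := by
            apply mul_le_mul_of_nonneg_left ?_ (Real.rpow_nonneg (by linarith) _)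
            exact mul_le_mul e1 e2 (Real.rpow_nonneg (by linarith) _)
              (Real.rpow_nonneg hd0.le _)
        _ = 2 * d ^ (θ - 1) * (l - μ) ^ (-θ) := by ring
  -- bound on the right piece
  have key2 : ∫ l in Ioo m 1, (l - μ) ^ (-θ) * (1 - l ^ 2) ^ (θ - 1) ≤ 1 / θ := by
    have hb : IntegrableOn (fun l => d ^ (-θ) * (1 - l) ^ (θ - 1)) (Ioo m 1) :=
      (intOn_rpow_sub' hm1.le le_rfl (by linarith)).const_mul _
    have hmono := setIntegral_mono_on Ifr hb measurableSet_Ioo ?_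
    · calc ∫ l in Ioo m 1, (l - μ) ^ (-θ) * (1 - l ^ 2) ^ (θ - 1)
          ≤ ∫ l in Ioo m 1, d ^ (-θ) * (1 - l) ^ (θ - 1) := hmono
        _ = d ^ (-θ) * ∫ l in Ioo m 1, (1 - l) ^ (θ - 1) := MeasureTheory.integral_const_mul _ _
        _ = d ^ (-θ) * (((1 - m) ^ (θ - 1 + 1) - (1 - 1) ^ (θ - 1 + 1)) / (θ - 1 + 1)) := by
            rw [int_rpow_sub' hm1.le (by linarith)]
        _ = 1 / θ := by
            rw [show (1 : ℝ) - m = d by rw [hm, hd]; ring, sub_self,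
              Real.zero_rpow (by linarith), sub_zero,
              show d ^ (-θ) * (d ^ (θ - 1 + 1) / (θ - 1 + 1)) =
                (d ^ (-θ) * d ^ (θ - 1 + 1)) / (θ - 1 + 1) by ring,
              ← Real.rpow_add hd0, show -θ + (θ - 1 + 1) = 0 by ring, Real.rpow_zero]
            ring
    · intro l hl
      have hl1 := hl.1; have hl2 := hl.2
      have hm14 : (1:ℝ)/4 ≤ m := by rw [hm]; linarith
      have e1 : (l - μ) ^ (-θ) ≤ d ^ (-θ) := by
        apply Real.rpow_le_rpow_of_nonpos hd0 ?_ (by linarith)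
        rw [hd, hm] at *; linarith
      have e2 : (1 + l) ^ (θ - 1) ≤ 1 :=
        Real.rpow_le_one_of_one_le_of_nonpos (by linarith) (by linarith)
      calc (l - μ) ^ (-θ) * (1 - l ^ 2) ^ (θ - 1)
          = (1 - l) ^ (θ - 1) * ((l - μ) ^ (-θ) * (1 + l) ^ (θ - 1)) := by
            rw [expand_sq (by linarith) (by linarith)]; ring
        _ ≤ (1 - l) ^ (θ - 1) * (d ^ (-θ) * 1) := by
            apply mul_le_mul_of_nonneg_left ?_ (Real.rpow_nonneg (by linarith) _)
            exact mul_le_mul e1 e2 (Real.rpow_nonneg (by linarith) _)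
              (Real.rpow_nonneg hd0.le _)
        _ = d ^ (-θ) * (1 - l) ^ (θ - 1) := by ring
  -- nonnegativity
  have hnn : 0 ≤ ∫ l in Ioo μ 1, (l - μ) ^ (-θ) * (1 - l ^ 2) ^ (θ - 1) := by
    apply setIntegral_nonneg measurableSet_Ioo
    intro l hl
    have hl1 := hl.1; have hl2 := hl.2
    apply mul_nonneg (Real.rpow_nonneg (by linarith) _) (Real.rpow_nonneg (by nlinarith) _)
  -- log bound
  have habs : |1 + μ| = 1 + μ := abs_of_pos (by linarith)
  have hlog : abs (Real.log (|1 + μ|)) ≤ Real.log 2 := by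
    rw [habs, abs_le]
    constructor
    · rw [← Real.log_inv]
      exact Real.log_le_log (by norm_num) (by norm_num; linarith)
    · exact Real.log_le_log (by linarith) (by linarith)
  have hc1 : (0:ℝ) < 2 ^ (θ - 1) := Real.rpow_pos_of_pos (by norm_num) _
  have hc2 : (2:ℝ) ^ (θ - 1) ≤ 1 := Real.rpow_le_one_of_one_le_of_nonpos (by norm_num) (by linarith)
  have hlog2 : abs (2 ^ (θ - 1) * Real.log (|1 + μ|)) ≤ Real.log 2 := by
    rw [abs_mul, abs_of_pos hc1]
    nlinarith [abs_nonneg (Real.log |1 + μ|)]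
  have hJ : ∫ l in Ioo μ 1, (l - μ) ^ (-θ) * (1 - l ^ 2) ^ (θ - 1) ≤ 2 / (1 - θ) + 1 / θ := by
    rw [hsum]; linarith
  rw [abs_le] at hlog2 ⊢
  constructor
  · have : (0:ℝ) ≤ 2 / (1 - θ) + 1 / θ := by positivity
    linarith [hlog2.1]
  · linarith [hlog2.2]

-- Case 4 : -2 < μ ≤ -3/2
lemma case4 {θ μ : ℝ} (hθ1 : 1/2 ≤ θ) (hθ2 : θ < 1) (h1 : -2 < μ) (h2 : μ ≤ -(3/2)) :
    abs ((∫ l in Ioo (-1 : ℝ) 1, (l - μ) ^ (-θ) * (1 - l ^ 2) ^ (θ - 1)) +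
        2 ^ (θ - 1) * Real.log (|1 + μ|)) ≤ 4 / θ + Real.log 2 := by
  have hθ0 : 0 < θ := by linarith
  have hμ : μ < -1 := by linarith
  have Ifl := If_midL (θ := θ) (μ := μ) (m := 0) hθ0 hμ (by norm_num) (by norm_num)
  have Ifr := If_right (θ := θ) (μ := μ) (m := 0) hθ0 (by linarith) (by norm_num) (by norm_num)
  obtain ⟨Ifull, hsum⟩ := int_split (by norm_num) (by norm_num) Ifl Ifr
  have e0 : ∀ l : ℝ, -1 ≤ l → (l - μ) ^ (-θ) ≤ 2 := by
    intro l hl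
    have : (l - μ) ^ (-θ) ≤ ((1:ℝ)/2) ^ (-θ) :=
      Real.rpow_le_rpow_of_nonpos (by norm_num) (by linarith) (by linarith)
    apply this.trans
    rw [show (1/2:ℝ) = 2⁻¹ by norm_num, Real.inv_rpow (by norm_num),
      ← Real.rpow_neg (by norm_num), neg_neg]
    calc (2:ℝ) ^ θ ≤ (2:ℝ) ^ (1:ℝ) :=
          Real.rpow_le_rpow_of_exponent_le (by norm_num) (by linarith)
      _ = 2 := Real.rpow_one 2
  have key1 : ∫ l in Ioo (-1 : ℝ) 0, (l - μ) ^ (-θ) * (1 - l ^ 2) ^ (θ - 1) ≤ 2 / θ := by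
    have hb : IntegrableOn (fun l : ℝ => 2 * (l - (-1)) ^ (θ - 1)) (Ioo (-1 : ℝ) 0) :=
      (intOn_rpow_sub le_rfl (by norm_num) (by linarith)).const_mul _
    have hmono := setIntegral_mono_on Ifl hb measurableSet_Ioo ?_
    · calc ∫ l in Ioo (-1 : ℝ) 0, (l - μ) ^ (-θ) * (1 - l ^ 2) ^ (θ - 1)
          ≤ ∫ l in Ioo (-1 : ℝ) 0, 2 * (l - (-1)) ^ (θ - 1) := hmono
        _ = 2 * ∫ l in Ioo (-1 : ℝ) 0, (l - (-1)) ^ (θ - 1) := MeasureTheory.integral_const_mul _ _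
        _ = 2 * (((0 - (-1)) ^ (θ - 1 + 1) - ((-1) - (-1)) ^ (θ - 1 + 1)) / (θ - 1 + 1)) := by
            rw [int_rpow_sub (by norm_num) (by linarith)]
        _ = 2 / θ := by
            rw [show (0:ℝ) - (-1) = 1 by ring, Real.one_rpow, sub_self,
              Real.zero_rpow (by intro h; rw [show θ - 1 + 1 = θ by ring] at h; linarith),
              show θ - 1 + 1 = θ by ring]
            ring
    · intro l hl
      have hl1 := hl.1; have hl2 := hl.2
      have e1 : (1 - l) ^ (θ - 1) ≤ 1 :=
        Real.rpow_le_one_of_one_le_of_nonpos (by linarith) (by linarith)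
      calc (l - μ) ^ (-θ) * (1 - l ^ 2) ^ (θ - 1)
          = (l - μ) ^ (-θ) * (1 - l) ^ (θ - 1) * (1 + l) ^ (θ - 1) := by
            rw [expand_sq (by linarith) (by linarith)]; ring
        _ ≤ 2 * 1 * (1 + l) ^ (θ - 1) := by
            apply mul_le_mul_of_nonneg_right ?_ (Real.rpow_nonneg (by linarith) _)
            exact mul_le_mul (e0 l (by linarith)) e1 (Real.rpow_nonneg (by linarith) _) (by norm_num)
        _ = 2 * (l - (-1)) ^ (θ - 1) := by rw [show l - (-1) = 1 + l by ring]; ring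
  have key2 : ∫ l in Ioo (0 : ℝ) 1, (l - μ) ^ (-θ) * (1 - l ^ 2) ^ (θ - 1) ≤ 2 / θ := by
    have hb : IntegrableOn (fun l : ℝ => 2 * (1 - l) ^ (θ - 1)) (Ioo (0 : ℝ) 1) :=
      (intOn_rpow_sub' (by norm_num) le_rfl (by linarith)).const_mul _
    have hmono := setIntegral_mono_on Ifr hb measurableSet_Ioo ?_
    · calc ∫ l in Ioo (0 : ℝ) 1, (l - μ) ^ (-θ) * (1 - l ^ 2) ^ (θ - 1)
          ≤ ∫ l in Ioo (0 : ℝ) 1, 2 * (1 - l) ^ (θ - 1) := hmono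
        _ = 2 * ∫ l in Ioo (0 : ℝ) 1, (1 - l) ^ (θ - 1) := MeasureTheory.integral_const_mul _ _
        _ = 2 * (((1 - 0) ^ (θ - 1 + 1) - (1 - 1) ^ (θ - 1 + 1)) / (θ - 1 + 1)) := by
            rw [int_rpow_sub' (by norm_num) (by linarith)]
        _ = 2 / θ := by
            rw [show (1:ℝ) - 0 = 1 by ring, Real.one_rpow, sub_self,
              Real.zero_rpow (by intro h; rw [show θ - 1 + 1 = θ by ring] at h; linarith),
              show θ - 1 + 1 = θ by ring]
            ring
    · intro l hl
      have hl1 := hl.1; have hl2 := hl.2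
      have e1 : (1 + l) ^ (θ - 1) ≤ 1 :=
        Real.rpow_le_one_of_one_le_of_nonpos (by linarith) (by linarith)
      calc (l - μ) ^ (-θ) * (1 - l ^ 2) ^ (θ - 1)
          = (l - μ) ^ (-θ) * (1 + l) ^ (θ - 1) * (1 - l) ^ (θ - 1) := by
            rw [expand_sq (by linarith) (by linarith)]; ring
        _ ≤ 2 * 1 * (1 - l) ^ (θ - 1) := by
            apply mul_le_mul_of_nonneg_right ?_ (Real.rpow_nonneg (by linarith) _)
            exact mul_le_mul (e0 l (by linarith)) e1 (Real.rpow_nonneg (by linarith) _) (by norm_num)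
        _ = 2 * (1 - l) ^ (θ - 1) := by ring
  have hnn : 0 ≤ ∫ l in Ioo (-1 : ℝ) 1, (l - μ) ^ (-θ) * (1 - l ^ 2) ^ (θ - 1) := by
    apply setIntegral_nonneg measurableSet_Ioo
    intro l hl
    have hl1 := hl.1; have hl2 := hl.2
    apply mul_nonneg (Real.rpow_nonneg (by linarith) _) (Real.rpow_nonneg (by nlinarith) _)
  have habs : |1 + μ| = -(1 + μ) := abs_of_neg (by linarith)
  have hlog : abs (Real.log (|1 + μ|)) ≤ Real.log 2 := by
    rw [habs, abs_le]
    constructor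
    · rw [← Real.log_inv]
      exact Real.log_le_log (by norm_num) (by norm_num; linarith)
    · exact Real.log_le_log (by linarith) (by linarith)
  have hc1 : (0:ℝ) < 2 ^ (θ - 1) := Real.rpow_pos_of_pos (by norm_num) _
  have hc2 : (2:ℝ) ^ (θ - 1) ≤ 1 := Real.rpow_le_one_of_one_le_of_nonpos (by norm_num) (by linarith)
  have hlog2 : abs (2 ^ (θ - 1) * Real.log (|1 + μ|)) ≤ Real.log 2 := by
    rw [abs_mul, abs_of_pos hc1]
    nlinarith [abs_nonneg (Real.log (|1 + μ|))]
  have hJ : ∫ l in Ioo (-1 : ℝ) 1, (l - μ) ^ (-θ) * (1 - l ^ 2) ^ (θ - 1) ≤ 4 / θ := by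
    rw [hsum]
    have : 2 / θ + 2 / θ = 4 / θ := by ring
    linarith
  rw [abs_le] at hlog2 ⊢
  constructor
  · have : (0:ℝ) ≤ 4 / θ := by positivity
    linarith [hlog2.1]
  · linarith [hlog2.2]

-- Case 2 : -1 < μ < -1/2
set_option maxHeartbeats 2000000 in
lemma case2 {θ μ : ℝ} (hθ1 : 1/2 ≤ θ) (hθ2 : θ < 1) (h1 : -1 < μ) (h2 : μ < -(1/2)) :
    abs ((∫ l in Ioo μ 1, (l - μ) ^ (-θ) * (1 - l ^ 2) ^ (θ - 1)) +
        2 ^ (θ - 1) * Real.log (|1 + μ|)) ≤ 1 / (1 - θ) + Real.log 2 + 2 + 2 / θ := by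
  have hθ0 : 0 < θ := by linarith
  have hθ1' : 0 < 1 - θ := by linarith
  obtain ⟨a, ha⟩ : ∃ a : ℝ, a = 1 + μ := ⟨_, rfl⟩
  have ha0 : 0 < a := by rw [ha]; linarith
  have ha12 : a < 1/2 := by rw [ha]; linarith
  obtain ⟨m, hm⟩ : ∃ m : ℝ, m = 1 + 2 * μ := ⟨_, rfl⟩
  have hμm : μ < m := by rw [hm]; linarith
  have hm0 : m < 0 := by rw [hm]; linarith
  have hm1 : -1 < m := by rw [hm]; linarith
  -- integrability of f on the three pieces
  have Ifa := If_left (θ := θ) (μ := μ) (m := m) hθ2 h1 hμm.le (by linarith)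
  have Ifb := If_left (θ := θ) (μ := μ) (m := 0) hθ2 h1 (by linarith) (by norm_num)
  have Ifb' : IntegrableOn (fun l => (l - μ) ^ (-θ) * (1 - l ^ 2) ^ (θ - 1)) (Ioo m 0) :=
    Ifb.mono_set (Ioo_subset_Ioo hμm.le le_rfl)
  have Ifr := If_right (θ := θ) (μ := μ) (m := 0) hθ0 (by linarith) (by norm_num) (by norm_num)
  -- integrability of g on pieces
  have Iga : IntegrableOn (fun l : ℝ => 2 ^ (θ - 1) * (l - (-1))⁻¹) (Ioo μ m) :=
    (intOn_inv_sub h1 hμm.le).const_mul _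
  have Igb : IntegrableOn (fun l : ℝ => 2 ^ (θ - 1) * (l - (-1))⁻¹) (Ioo m 0) :=
    (intOn_inv_sub hm1 hm0.le).const_mul _
  -- the integral of g over (μ, 0)
  obtain ⟨Ig0, hgsum⟩ := int_split hμm.le hm0.le Iga Igb
  have hglog : ∫ l in Ioo μ 0, 2 ^ (θ - 1) * (l - (-1))⁻¹ = -(2 ^ (θ - 1) * Real.log a) := by
    rw [MeasureTheory.integral_const_mul, int_inv_sub (by linarith) (by linarith)]
    rw [show (0:ℝ) - (-1) = 1 by ring, show μ - (-1) = a by rw [ha]; ring, Real.log_one]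
    ring
  obtain ⟨If0, hfsum⟩ := int_split hμm.le hm0.le Ifa Ifb'
  obtain ⟨Ifull, hsum⟩ := int_split (by linarith : μ ≤ (0:ℝ)) (by norm_num) If0 Ifr
  -- Piece A : on (μ, m)
  have hA : abs ((∫ l in Ioo μ m, (l - μ) ^ (-θ) * (1 - l ^ 2) ^ (θ - 1)) -
      ∫ l in Ioo μ m, 2 ^ (θ - 1) * (l - (-1))⁻¹) ≤ 1 / (1 - θ) + Real.log 2 := by
    have hf_nn : 0 ≤ ∫ l in Ioo μ m, (l - μ) ^ (-θ) * (1 - l ^ 2) ^ (θ - 1) := by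
      apply setIntegral_nonneg measurableSet_Ioo
      intro l hl
      have hl1 := hl.1; have hl2 := hl.2
      apply mul_nonneg (Real.rpow_nonneg (by linarith) _) (Real.rpow_nonneg (by nlinarith) _)
    have hg_nn : 0 ≤ ∫ l in Ioo μ m, 2 ^ (θ - 1) * (l - (-1))⁻¹ := by
      apply setIntegral_nonneg measurableSet_Ioo
      intro l hl
      have hl1 := hl.1
      have : (0:ℝ) < l - (-1) := by linarith
      positivity
    have hf_ub : ∫ l in Ioo μ m, (l - μ) ^ (-θ) * (1 - l ^ 2) ^ (θ - 1) ≤ 1 / (1 - θ) := by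
      have hb : IntegrableOn (fun l => a ^ (θ - 1) * (l - μ) ^ (-θ)) (Ioo μ m) :=
        (intOn_rpow_sub le_rfl hμm.le (by linarith)).const_mul _
      have hmono := setIntegral_mono_on Ifa hb measurableSet_Ioo ?_
      · calc ∫ l in Ioo μ m, (l - μ) ^ (-θ) * (1 - l ^ 2) ^ (θ - 1)
            ≤ ∫ l in Ioo μ m, a ^ (θ - 1) * (l - μ) ^ (-θ) := hmono
          _ = a ^ (θ - 1) * ∫ l in Ioo μ m, (l - μ) ^ (-θ) := MeasureTheory.integral_const_mul _ _
          _ = a ^ (θ - 1) * (((m - μ) ^ (-θ + 1) - (μ - μ) ^ (-θ + 1)) / (-θ + 1)) := by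
              rw [int_rpow_sub hμm.le (by linarith)]
          _ = 1 / (1 - θ) := by
              rw [show m - μ = a by rw [hm, ha]; ring, sub_self,
                Real.zero_rpow (by intro h; linarith), sub_zero,
                show a ^ (θ - 1) * (a ^ (-θ + 1) / (-θ + 1)) =
                  (a ^ (θ - 1) * a ^ (-θ + 1)) / (-θ + 1) by ring,
                ← Real.rpow_add ha0, show θ - 1 + (-θ + 1) = 0 by ring, Real.rpow_zero]
              ring
      · intro l hl
        have hl1 := hl.1; have hl2 := hl.2
        have e1 : (1 - l) ^ (θ - 1) ≤ 1 :=
          Real.rpow_le_one_of_one_le_of_nonpos (by linarith) (by linarith)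
        have e2 : (1 + l) ^ (θ - 1) ≤ a ^ (θ - 1) :=
          Real.rpow_le_rpow_of_nonpos ha0 (by rw [ha]; linarith) (by linarith)
        calc (l - μ) ^ (-θ) * (1 - l ^ 2) ^ (θ - 1)
            = (l - μ) ^ (-θ) * ((1 + l) ^ (θ - 1) * (1 - l) ^ (θ - 1)) := by
              rw [expand_sq (by linarith) (by linarith)]; ring
          _ ≤ (l - μ) ^ (-θ) * (a ^ (θ - 1) * 1) := by
              apply mul_le_mul_of_nonneg_left ?_ (Real.rpow_nonneg (by linarith) _)
              exact mul_le_mul e2 e1 (Real.rpow_nonneg (by linarith) _)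
                (Real.rpow_nonneg ha0.le _)
          _ = a ^ (θ - 1) * (l - μ) ^ (-θ) := by ring
    have hg_ub : ∫ l in Ioo μ m, 2 ^ (θ - 1) * (l - (-1))⁻¹ ≤ Real.log 2 := by
      have hb : IntegrableOn (fun l : ℝ => (l - (-1))⁻¹) (Ioo μ m) := intOn_inv_sub h1 hμm.le
      have hmono := setIntegral_mono_on Iga hb measurableSet_Ioo ?_
      · calc ∫ l in Ioo μ m, 2 ^ (θ - 1) * (l - (-1))⁻¹
            ≤ ∫ l in Ioo μ m, (l - (-1))⁻¹ := hmono
          _ = Real.log (m - (-1)) - Real.log (μ - (-1)) := int_inv_sub h1 hμm.le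
          _ = Real.log 2 := by
              rw [show m - (-1) = 2 * a by rw [hm, ha]; ring, show μ - (-1) = a by rw [ha]; ring,
                Real.log_mul (by norm_num) (ne_of_gt ha0)]
              ring
      · intro l hl
        have hl1 := hl.1
        have hpos : (0:ℝ) < l - (-1) := by linarith
        have hc2 : (2:ℝ) ^ (θ - 1) ≤ 1 :=
          Real.rpow_le_one_of_one_le_of_nonpos (by norm_num) (by linarith)
        nlinarith [inv_pos.2 hpos]
    rw [abs_le]
    constructor
    · have : (0:ℝ) ≤ 1 / (1 - θ) := by positivity
      linarith
    · have : (0:ℝ) ≤ Real.log 2 := Real.log_nonneg (by norm_num)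
      linarith
  -- Piece B : on (m, 0)
  have hB : abs ((∫ l in Ioo m 0, (l - μ) ^ (-θ) * (1 - l ^ 2) ^ (θ - 1)) -
      ∫ l in Ioo m 0, 2 ^ (θ - 1) * (l - (-1))⁻¹) ≤ 2 := by
    have Iφ : IntegrableOn (fun l : ℝ => 2 * a * (l - (-1)) ^ (-2 : ℝ) + 1) (Ioo m 0) := by
      apply ((intOn_invsq_sub hm1 hm0.le).const_mul (2 * a)).add
      exact integrableOn_const measure_Ioo_lt_top.ne
    have hptw : ∀ l ∈ Ioo m 0, |(l - μ) ^ (-θ) * (1 - l ^ 2) ^ (θ - 1) -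
        2 ^ (θ - 1) * (l - (-1))⁻¹| ≤ 2 * a * (l - (-1)) ^ (-2 : ℝ) + 1 := by
      intro l hl
      have hl1 := hl.1; have hl2 := hl.2
      have hu0 : (0:ℝ) < 1 + l := by linarith
      have hu2a : 2 * a ≤ 1 + l := by rw [ha]; rw [hm] at hl1; linarith
      have hv0 : (0:ℝ) < l - μ := by linarith
      have hvu : l - μ ≤ 1 + l := by linarith
      have hv2 : (1 + l) / 2 ≤ l - μ := by rw [ha] at hu2a; linarith
      -- h1 - h2 bounds
      have hd1 : (1 + l)⁻¹ ≤ (l - μ) ^ (-θ) * (1 + l) ^ (θ - 1) := by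
        have e : (1 + l) ^ (-θ) ≤ (l - μ) ^ (-θ) :=
          Real.rpow_le_rpow_of_nonpos hv0 hvu (by linarith)
        have e2 : (1 + l) ^ (-θ) * (1 + l) ^ (θ - 1) = (1 + l)⁻¹ := by
          rw [← Real.rpow_add hu0, show -θ + (θ - 1) = -1 by ring, Real.rpow_neg_one]
        calc (1 + l)⁻¹ = (1 + l) ^ (-θ) * (1 + l) ^ (θ - 1) := e2.symm
          _ ≤ (l - μ) ^ (-θ) * (1 + l) ^ (θ - 1) :=
              mul_le_mul_of_nonneg_right e (Real.rpow_nonneg hu0.le _)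
      have hd2 : (l - μ) ^ (-θ) * (1 + l) ^ (θ - 1) - (1 + l)⁻¹ ≤
          2 * a * (1 + l) ^ (-2 : ℝ) := by
        have hratio : ((1 + l) / (l - μ)) ^ θ ≤ (1 + l) / (l - μ) :=
          ratio_pow_le (by linarith) (by linarith) hv0 hvu
        have hform : (l - μ) ^ (-θ) * (1 + l) ^ (θ - 1) =
            (1 + l)⁻¹ * ((1 + l) / (l - μ)) ^ θ := by
          rw [Real.div_rpow hu0.le hv0.le, Real.rpow_neg hv0.le]
          have e' : (1 + l) ^ (θ - 1) = (1 + l) ^ θ * (1 + l)⁻¹ := by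
            rw [← Real.rpow_neg_one (1 + l), ← Real.rpow_add hu0,
              show θ + -1 = θ - 1 by ring]
          rw [e']; ring
        rw [hform]
        have step1 : (1 + l)⁻¹ * ((1 + l) / (l - μ)) ^ θ - (1 + l)⁻¹ ≤
            (1 + l)⁻¹ * ((1 + l) / (l - μ) - 1) := by
          have := mul_le_mul_of_nonneg_left hratio (inv_nonneg.2 hu0.le)
          linarith
        apply step1.trans
        have e3 : (1 + l) / (l - μ) - 1 = a / (l - μ) := by
          rw [ha, div_sub_one (ne_of_gt hv0)]
          congr 1
          ring
        rw [e3]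
        have e4 : a / (l - μ) ≤ 2 * a / (1 + l) := by
          rw [div_le_div_iff₀ hv0 hu0]
          nlinarith [mul_le_mul_of_nonneg_left hv2 ha0.le]
        have e5 : (1 + l)⁻¹ * (a / (l - μ)) ≤ (1 + l)⁻¹ * (2 * a / (1 + l)) :=
          mul_le_mul_of_nonneg_left e4 (inv_nonneg.2 hu0.le)
        apply e5.trans
        have e6 : (1 + l) ^ (-2 : ℝ) = (1 + l)⁻¹ * (1 + l)⁻¹ := by
          rw [show (-2 : ℝ) = -1 + -1 by norm_num, Real.rpow_add hu0,
            Real.rpow_neg_one]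
        exact le_of_eq (by rw [e6, div_eq_mul_inv]; ring)
      -- chord bound
      have hch : |(1 - l) ^ (θ - 1) - 2 ^ (θ - 1)| ≤ 1 + l := by
        have hc := chord (θ := θ) (x := 1 - l) (by linarith) (by linarith)
          (by linarith) (by linarith)
        rw [show 2 - (1 - l) = 1 + l by ring] at hc
        exact hc
      have hsplit : (l - μ) ^ (-θ) * (1 - l ^ 2) ^ (θ - 1) - 2 ^ (θ - 1) * (l - (-1))⁻¹ =
          (1 - l) ^ (θ - 1) * ((l - μ) ^ (-θ) * (1 + l) ^ (θ - 1) - (1 + l)⁻¹) +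
            ((1 - l) ^ (θ - 1) - 2 ^ (θ - 1)) * (1 + l)⁻¹ := by
        rw [expand_sq (by linarith) (by linarith), show l - (-1) = 1 + l by ring]
        ring
      rw [hsplit]
      have e1 : (1 - l) ^ (θ - 1) ≤ 1 :=
        Real.rpow_le_one_of_one_le_of_nonpos (by linarith) (by linarith)
      have t1 : |(1 - l) ^ (θ - 1) * ((l - μ) ^ (-θ) * (1 + l) ^ (θ - 1) - (1 + l)⁻¹)| ≤
          2 * a * (1 + l) ^ (-2 : ℝ) := by
        rw [abs_of_nonneg (mul_nonneg (Real.rpow_nonneg (by linarith) _) (by linarith))]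
        calc (1 - l) ^ (θ - 1) * ((l - μ) ^ (-θ) * (1 + l) ^ (θ - 1) - (1 + l)⁻¹)
            ≤ 1 * (2 * a * (1 + l) ^ (-2 : ℝ)) :=
              mul_le_mul e1 hd2 (by linarith) (by norm_num)
          _ = 2 * a * (1 + l) ^ (-2 : ℝ) := by ring
      have t2 : |((1 - l) ^ (θ - 1) - 2 ^ (θ - 1)) * (1 + l)⁻¹| ≤ 1 := by
        rw [abs_mul, abs_of_nonneg (inv_nonneg.2 hu0.le)]
        calc |(1 - l) ^ (θ - 1) - 2 ^ (θ - 1)| * (1 + l)⁻¹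
            ≤ (1 + l) * (1 + l)⁻¹ :=
              mul_le_mul_of_nonneg_right hch (inv_nonneg.2 hu0.le)
          _ = 1 := mul_inv_cancel₀ (ne_of_gt hu0)
      calc |(1 - l) ^ (θ - 1) * ((l - μ) ^ (-θ) * (1 + l) ^ (θ - 1) - (1 + l)⁻¹) +
            ((1 - l) ^ (θ - 1) - 2 ^ (θ - 1)) * (1 + l)⁻¹|
          ≤ |(1 - l) ^ (θ - 1) * ((l - μ) ^ (-θ) * (1 + l) ^ (θ - 1) - (1 + l)⁻¹)| +
            |((1 - l) ^ (θ - 1) - 2 ^ (θ - 1)) * (1 + l)⁻¹| := abs_add_le _ _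
        _ ≤ 2 * a * (1 + l) ^ (-2 : ℝ) + 1 := add_le_add t1 t2
        _ = 2 * a * (l - (-1)) ^ (-2 : ℝ) + 1 := by rw [show l - (-1) = 1 + l by ring]
    -- integral of φ
    have hφint : ∫ l in Ioo m 0, (2 * a * (l - (-1)) ^ (-2 : ℝ) + 1) ≤ 2 := by
      have h1' : ∫ l in Ioo m 0, (2 * a * (l - (-1)) ^ (-2 : ℝ) + 1) =
          2 * a * (∫ l in Ioo m 0, (l - (-1)) ^ (-2 : ℝ)) + ∫ l in Ioo m 0, (1 : ℝ) := by
        rw [MeasureTheory.integral_add ((intOn_invsq_sub hm1 hm0.le).const_mul (2 * a))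
          (integrableOn_const measure_Ioo_lt_top.ne)]
        rw [MeasureTheory.integral_const_mul]
      rw [h1', int_invsq_sub hm1 hm0.le]
      have hvol : ∫ l in Ioo m 0, (1 : ℝ) = -m := by
        rw [setIntegral_const, Real.volume_real_Ioo_of_le (by linarith), smul_eq_mul, mul_one]
        ring
      rw [hvol]
      have hminv : m - (-1) = 2 * a := by rw [hm, ha]; ring
      rw [hminv]
      have : 2 * a * ((2 * a)⁻¹ - (0 - (-1))⁻¹) = 1 - 2 * a := by
        rw [show (0:ℝ) - (-1) = 1 by ring]
        field_simp
      rw [this]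
      have hm2a : m = 2 * a - 1 := by rw [hm, ha]; ring
      linarith
    -- conclude piece B
    have hdiff : (∫ l in Ioo m 0, (l - μ) ^ (-θ) * (1 - l ^ 2) ^ (θ - 1)) -
        (∫ l in Ioo m 0, 2 ^ (θ - 1) * (l - (-1))⁻¹) =
        ∫ l in Ioo m 0, ((l - μ) ^ (-θ) * (1 - l ^ 2) ^ (θ - 1) -
          2 ^ (θ - 1) * (l - (-1))⁻¹) :=
      (MeasureTheory.integral_sub Ifb' Igb).symm
    rw [hdiff]
    have habs : |∫ l in Ioo m 0, ((l - μ) ^ (-θ) * (1 - l ^ 2) ^ (θ - 1) -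
        2 ^ (θ - 1) * (l - (-1))⁻¹)| ≤
        ∫ l in Ioo m 0, |(l - μ) ^ (-θ) * (1 - l ^ 2) ^ (θ - 1) -
          2 ^ (θ - 1) * (l - (-1))⁻¹| := by
      have := MeasureTheory.norm_integral_le_integral_norm (μ := volume.restrict (Ioo m 0))
        (f := fun l => (l - μ) ^ (-θ) * (1 - l ^ 2) ^ (θ - 1) - 2 ^ (θ - 1) * (l - (-1))⁻¹)
      simpa [Real.norm_eq_abs] using this
    apply habs.trans
    have hmono := setIntegral_mono_on ((Ifb'.sub Igb).abs) Iφ measurableSet_Ioo hptw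
    exact hmono.trans hφint
  -- Piece C : on (0, 1)
  have hC : ∫ l in Ioo (0:ℝ) 1, (l - μ) ^ (-θ) * (1 - l ^ 2) ^ (θ - 1) ≤ 2 / θ := by
    have hb : IntegrableOn (fun l : ℝ => 2 * (1 - l) ^ (θ - 1)) (Ioo (0 : ℝ) 1) :=
      (intOn_rpow_sub' (by norm_num) le_rfl (by linarith)).const_mul _
    have hmono := setIntegral_mono_on Ifr hb measurableSet_Ioo ?_
    · calc ∫ l in Ioo (0:ℝ) 1, (l - μ) ^ (-θ) * (1 - l ^ 2) ^ (θ - 1)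
          ≤ ∫ l in Ioo (0:ℝ) 1, 2 * (1 - l) ^ (θ - 1) := hmono
        _ = 2 * ∫ l in Ioo (0:ℝ) 1, (1 - l) ^ (θ - 1) := MeasureTheory.integral_const_mul _ _
        _ = 2 * (((1 - 0) ^ (θ - 1 + 1) - (1 - 1) ^ (θ - 1 + 1)) / (θ - 1 + 1)) := by
            rw [int_rpow_sub' (by norm_num) (by linarith)]
        _ = 2 / θ := by
            rw [show (1:ℝ) - 0 = 1 by ring, Real.one_rpow, sub_self,
              Real.zero_rpow (by intro h; rw [show θ - 1 + 1 = θ by ring] at h; linarith),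
              show θ - 1 + 1 = θ by ring]
            ring
    · intro l hl
      have hl1 := hl.1; have hl2 := hl.2
      have e0 : (l - μ) ^ (-θ) ≤ 2 := by
        have h' : (l - μ) ^ (-θ) ≤ ((1:ℝ)/2) ^ (-θ) :=
          Real.rpow_le_rpow_of_nonpos (by norm_num) (by linarith) (by linarith)
        apply h'.trans
        rw [show (1/2:ℝ) = 2⁻¹ by norm_num, Real.inv_rpow (by norm_num),
          ← Real.rpow_neg (by norm_num), neg_neg]
        calc (2:ℝ) ^ θ ≤ (2:ℝ) ^ (1:ℝ) :=
              Real.rpow_le_rpow_of_exponent_le (by norm_num) (by linarith)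
          _ = 2 := Real.rpow_one 2
      have e1 : (1 + l) ^ (θ - 1) ≤ 1 :=
        Real.rpow_le_one_of_one_le_of_nonpos (by linarith) (by linarith)
      calc (l - μ) ^ (-θ) * (1 - l ^ 2) ^ (θ - 1)
          = (l - μ) ^ (-θ) * (1 + l) ^ (θ - 1) * (1 - l) ^ (θ - 1) := by
            rw [expand_sq (by linarith) (by linarith)]; ring
        _ ≤ 2 * 1 * (1 - l) ^ (θ - 1) := by
            apply mul_le_mul_of_nonneg_right ?_ (Real.rpow_nonneg (by linarith) _)
            exact mul_le_mul e0 e1 (Real.rpow_nonneg (by linarith) _) (by norm_num)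
        _ = 2 * (1 - l) ^ (θ - 1) := by ring
  have hC0 : 0 ≤ ∫ l in Ioo (0:ℝ) 1, (l - μ) ^ (-θ) * (1 - l ^ 2) ^ (θ - 1) := by
    apply setIntegral_nonneg measurableSet_Ioo
    intro l hl
    have hl1 := hl.1; have hl2 := hl.2
    apply mul_nonneg (Real.rpow_nonneg (by linarith) _) (Real.rpow_nonneg (by nlinarith) _)
  -- assembly
  have habsa : |1 + μ| = a := by rw [ha]; exact abs_of_pos (by rw [ha] at ha0; exact ha0)
  have hkey : (∫ l in Ioo μ 1, (l - μ) ^ (-θ) * (1 - l ^ 2) ^ (θ - 1)) +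
      2 ^ (θ - 1) * Real.log (|1 + μ|) =
      ((∫ l in Ioo μ m, (l - μ) ^ (-θ) * (1 - l ^ 2) ^ (θ - 1)) -
        ∫ l in Ioo μ m, 2 ^ (θ - 1) * (l - (-1))⁻¹) +
      ((∫ l in Ioo m 0, (l - μ) ^ (-θ) * (1 - l ^ 2) ^ (θ - 1)) -
        ∫ l in Ioo m 0, 2 ^ (θ - 1) * (l - (-1))⁻¹) +
      ∫ l in Ioo (0:ℝ) 1, (l - μ) ^ (-θ) * (1 - l ^ 2) ^ (θ - 1) := by
    rw [habsa]
    have : 2 ^ (θ - 1) * Real.log a = -∫ l in Ioo μ 0, 2 ^ (θ - 1) * (l - (-1))⁻¹ := by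
      rw [hglog]; ring
    rw [this, hsum, hfsum, hgsum]
    ring
  rw [hkey]
  calc |(∫ l in Ioo μ m, (l - μ) ^ (-θ) * (1 - l ^ 2) ^ (θ - 1)) -
        (∫ l in Ioo μ m, 2 ^ (θ - 1) * (l - (-1))⁻¹) +
      ((∫ l in Ioo m 0, (l - μ) ^ (-θ) * (1 - l ^ 2) ^ (θ - 1)) -
        ∫ l in Ioo m 0, 2 ^ (θ - 1) * (l - (-1))⁻¹) +
      ∫ l in Ioo (0:ℝ) 1, (l - μ) ^ (-θ) * (1 - l ^ 2) ^ (θ - 1)|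
      ≤ |(∫ l in Ioo μ m, (l - μ) ^ (-θ) * (1 - l ^ 2) ^ (θ - 1)) -
        (∫ l in Ioo μ m, 2 ^ (θ - 1) * (l - (-1))⁻¹) +
      ((∫ l in Ioo m 0, (l - μ) ^ (-θ) * (1 - l ^ 2) ^ (θ - 1)) -
        ∫ l in Ioo m 0, 2 ^ (θ - 1) * (l - (-1))⁻¹)| +
      |∫ l in Ioo (0:ℝ) 1, (l - μ) ^ (-θ) * (1 - l ^ 2) ^ (θ - 1)| := abs_add_le _ _
    _ ≤ (|(∫ l in Ioo μ m, (l - μ) ^ (-θ) * (1 - l ^ 2) ^ (θ - 1)) -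
        (∫ l in Ioo μ m, 2 ^ (θ - 1) * (l - (-1))⁻¹)| +
      |(∫ l in Ioo m 0, (l - μ) ^ (-θ) * (1 - l ^ 2) ^ (θ - 1)) -
        ∫ l in Ioo m 0, 2 ^ (θ - 1) * (l - (-1))⁻¹|) +
      |∫ l in Ioo (0:ℝ) 1, (l - μ) ^ (-θ) * (1 - l ^ 2) ^ (θ - 1)| := by
        apply add_le_add_left (abs_add_le _ _)
    _ ≤ 1 / (1 - θ) + Real.log 2 + 2 + 2 / θ := by
        have h3 : |∫ l in Ioo (0:ℝ) 1, (l - μ) ^ (-θ) * (1 - l ^ 2) ^ (θ - 1)| ≤ 2 / θ := by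
          rw [abs_of_nonneg hC0]; exact hC
        linarith [hA, hB, h3]

-- Case 3 : -3/2 < μ < -1
set_option maxHeartbeats 2000000 in
lemma case3 {θ μ : ℝ} (hθ1 : 1/2 ≤ θ) (hθ2 : θ < 1) (h1 : -(3/2) < μ) (h2 : μ < -1) :
    abs ((∫ l in Ioo (-1 : ℝ) 1, (l - μ) ^ (-θ) * (1 - l ^ 2) ^ (θ - 1)) +
        2 ^ (θ - 1) * Real.log (|1 + μ|)) ≤ 3 / θ + 2 * Real.log 2 + 2 := by
  have hθ0 : 0 < θ := by linarith
  have hθ1' : 0 < 1 - θ := by linarith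
  obtain ⟨a, ha⟩ : ∃ a : ℝ, a = -1 - μ := ⟨_, rfl⟩
  have ha0 : 0 < a := by rw [ha]; linarith
  have ha12 : a < 1/2 := by rw [ha]; linarith
  obtain ⟨m, hm⟩ : ∃ m : ℝ, m = -1 + a := ⟨_, rfl⟩
  have hm1 : -1 < m := by rw [hm]; linarith
  have hm0 : m < 0 := by rw [hm]; linarith
  -- integrability of f on the pieces
  have Ifa := If_midL (θ := θ) (μ := μ) (m := m) hθ0 h2 hm1.le (by linarith)
  have Ifb0 := If_midL (θ := θ) (μ := μ) (m := 0) hθ0 h2 (by norm_num) (by norm_num)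
  have Ifb : IntegrableOn (fun l => (l - μ) ^ (-θ) * (1 - l ^ 2) ^ (θ - 1)) (Ioo m 0) :=
    Ifb0.mono_set (Ioo_subset_Ioo hm1.le le_rfl)
  have Ifr := If_right (θ := θ) (μ := μ) (m := 0) hθ0 (by linarith) (by norm_num) (by norm_num)
  -- integrability of g
  have Iga : IntegrableOn (fun l : ℝ => 2 ^ (θ - 1) * (l - μ)⁻¹) (Ioo (-1 : ℝ) m) :=
    (intOn_inv_sub h2 hm1.le).const_mul _
  have Igb : IntegrableOn (fun l : ℝ => 2 ^ (θ - 1) * (l - μ)⁻¹) (Ioo m 0) :=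
    (intOn_inv_sub (by linarith) hm0.le).const_mul _
  obtain ⟨Ig0, hgsum⟩ := int_split hm1.le hm0.le Iga Igb
  have hglog : ∫ l in Ioo (-1 : ℝ) 0, 2 ^ (θ - 1) * (l - μ)⁻¹ =
      2 ^ (θ - 1) * Real.log (1 + a) - 2 ^ (θ - 1) * Real.log a := by
    rw [MeasureTheory.integral_const_mul, int_inv_sub (by linarith) (by norm_num)]
    rw [show (0:ℝ) - μ = 1 + a by rw [ha]; ring, show -1 - μ = a by rw [ha]]
    ring
  obtain ⟨If0, hfsum⟩ := int_split hm1.le hm0.le Ifa Ifb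
  obtain ⟨Ifull, hsum⟩ := int_split (by norm_num : (-1:ℝ) ≤ 0) (by norm_num) If0 Ifr
  -- Piece A : on (-1, m)
  have hA : abs ((∫ l in Ioo (-1 : ℝ) m, (l - μ) ^ (-θ) * (1 - l ^ 2) ^ (θ - 1)) -
      ∫ l in Ioo (-1 : ℝ) m, 2 ^ (θ - 1) * (l - μ)⁻¹) ≤ 1 / θ + Real.log 2 := by
    have hf_nn : 0 ≤ ∫ l in Ioo (-1 : ℝ) m, (l - μ) ^ (-θ) * (1 - l ^ 2) ^ (θ - 1) := by
      apply setIntegral_nonneg measurableSet_Ioo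
      intro l hl
      have hl1 := hl.1; have hl2 := hl.2
      apply mul_nonneg (Real.rpow_nonneg (by linarith) _) (Real.rpow_nonneg (by nlinarith) _)
    have hg_nn : 0 ≤ ∫ l in Ioo (-1 : ℝ) m, 2 ^ (θ - 1) * (l - μ)⁻¹ := by
      apply setIntegral_nonneg measurableSet_Ioo
      intro l hl
      have hl1 := hl.1
      have : (0:ℝ) < l - μ := by linarith
      positivity
    have hf_ub : ∫ l in Ioo (-1 : ℝ) m, (l - μ) ^ (-θ) * (1 - l ^ 2) ^ (θ - 1) ≤ 1 / θ := by
      have hb : IntegrableOn (fun l : ℝ => a ^ (-θ) * (l - (-1)) ^ (θ - 1)) (Ioo (-1 : ℝ) m) :=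
        (intOn_rpow_sub le_rfl hm1.le (by linarith)).const_mul _
      have hmono := setIntegral_mono_on Ifa hb measurableSet_Ioo ?_
      · calc ∫ l in Ioo (-1 : ℝ) m, (l - μ) ^ (-θ) * (1 - l ^ 2) ^ (θ - 1)
            ≤ ∫ l in Ioo (-1 : ℝ) m, a ^ (-θ) * (l - (-1)) ^ (θ - 1) := hmono
          _ = a ^ (-θ) * ∫ l in Ioo (-1 : ℝ) m, (l - (-1)) ^ (θ - 1) :=
              MeasureTheory.integral_const_mul _ _
          _ = a ^ (-θ) * (((m - (-1)) ^ (θ - 1 + 1) - ((-1 : ℝ) - (-1)) ^ (θ - 1 + 1)) /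
              (θ - 1 + 1)) := by rw [int_rpow_sub hm1.le (by linarith)]
          _ = 1 / θ := by
              rw [show m - (-1) = a by rw [hm]; ring, sub_self,
                Real.zero_rpow (by intro h; rw [show θ - 1 + 1 = θ by ring] at h; linarith),
                sub_zero, show θ - 1 + 1 = θ by ring,
                show a ^ (-θ) * (a ^ θ / θ) = (a ^ (-θ) * a ^ θ) / θ by ring,
                ← Real.rpow_add ha0, show -θ + θ = 0 by ring, Real.rpow_zero]
      · intro l hl
        have hl1 := hl.1; have hl2 := hl.2
        have e1 : (1 - l) ^ (θ - 1) ≤ 1 :=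
          Real.rpow_le_one_of_one_le_of_nonpos (by linarith) (by linarith)
        have e2 : (l - μ) ^ (-θ) ≤ a ^ (-θ) := by
          apply Real.rpow_le_rpow_of_nonpos ha0 ?_ (by linarith)
          rw [ha]; linarith
        calc (l - μ) ^ (-θ) * (1 - l ^ 2) ^ (θ - 1)
            = (l - μ) ^ (-θ) * (1 - l) ^ (θ - 1) * (1 + l) ^ (θ - 1) := by
              rw [expand_sq (by linarith) (by linarith)]; ring
          _ ≤ a ^ (-θ) * 1 * (1 + l) ^ (θ - 1) := by
              apply mul_le_mul_of_nonneg_right ?_ (Real.rpow_nonneg (by linarith) _)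
              exact mul_le_mul e2 e1 (Real.rpow_nonneg (by linarith) _)
                (Real.rpow_nonneg ha0.le _)
          _ = a ^ (-θ) * (l - (-1)) ^ (θ - 1) := by
              rw [show l - (-1) = 1 + l by ring]; ring
    have hg_ub : ∫ l in Ioo (-1 : ℝ) m, 2 ^ (θ - 1) * (l - μ)⁻¹ ≤ Real.log 2 := by
      have hb : IntegrableOn (fun l : ℝ => (l - μ)⁻¹) (Ioo (-1 : ℝ) m) :=
        intOn_inv_sub h2 hm1.le
      have hmono := setIntegral_mono_on Iga hb measurableSet_Ioo ?_
      · calc ∫ l in Ioo (-1 : ℝ) m, 2 ^ (θ - 1) * (l - μ)⁻¹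
            ≤ ∫ l in Ioo (-1 : ℝ) m, (l - μ)⁻¹ := hmono
          _ = Real.log (m - μ) - Real.log ((-1 : ℝ) - μ) := int_inv_sub h2 hm1.le
          _ = Real.log 2 := by
              rw [show m - μ = 2 * a by rw [hm, ha]; ring, show (-1 : ℝ) - μ = a by rw [ha],
                Real.log_mul (by norm_num) (ne_of_gt ha0)]
              ring
      · intro l hl
        have hl1 := hl.1
        have hpos : (0:ℝ) < l - μ := by linarith
        have hc2 : (2:ℝ) ^ (θ - 1) ≤ 1 :=
          Real.rpow_le_one_of_one_le_of_nonpos (by norm_num) (by linarith)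
        nlinarith [inv_pos.2 hpos]
    rw [abs_le]
    constructor
    · have : (0:ℝ) ≤ 1 / θ := by positivity
      linarith
    · have : (0:ℝ) ≤ Real.log 2 := Real.log_nonneg (by norm_num)
      linarith
  -- Piece B : on (m, 0)
  have hB : abs ((∫ l in Ioo m 0, (l - μ) ^ (-θ) * (1 - l ^ 2) ^ (θ - 1)) -
      ∫ l in Ioo m 0, 2 ^ (θ - 1) * (l - μ)⁻¹) ≤ 2 := by
    have Iφ : IntegrableOn (fun l : ℝ => a * (l - (-1)) ^ (-2 : ℝ) + 1) (Ioo m 0) := by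
      apply ((intOn_invsq_sub hm1 hm0.le).const_mul a).add
      exact integrableOn_const measure_Ioo_lt_top.ne
    have hptw : ∀ l ∈ Ioo m 0, |(l - μ) ^ (-θ) * (1 - l ^ 2) ^ (θ - 1) -
        2 ^ (θ - 1) * (l - μ)⁻¹| ≤ a * (l - (-1)) ^ (-2 : ℝ) + 1 := by
      intro l hl
      have hl1 := hl.1; have hl2 := hl.2
      have hu0 : (0:ℝ) < 1 + l := by linarith
      have hua : a ≤ 1 + l := by rw [hm] at hl1; linarith
      have hv0 : (0:ℝ) < l - μ := by linarith
      have huv : 1 + l ≤ l - μ := by linarith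
      have hveq : l - μ = (1 + l) + a := by rw [ha]; ring
      have hd1 : (l - μ)⁻¹ ≤ (l - μ) ^ (-θ) * (1 + l) ^ (θ - 1) := by
        have e : (l - μ) ^ (θ - 1) ≤ (1 + l) ^ (θ - 1) :=
          Real.rpow_le_rpow_of_nonpos hu0 huv (by linarith)
        have e2 : (l - μ) ^ (-θ) * (l - μ) ^ (θ - 1) = (l - μ)⁻¹ := by
          rw [← Real.rpow_add hv0, show -θ + (θ - 1) = -1 by ring, Real.rpow_neg_one]
        calc (l - μ)⁻¹ = (l - μ) ^ (-θ) * (l - μ) ^ (θ - 1) := e2.symm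
          _ ≤ (l - μ) ^ (-θ) * (1 + l) ^ (θ - 1) :=
              mul_le_mul_of_nonneg_left e (Real.rpow_nonneg hv0.le _)
      have hd2 : (l - μ) ^ (-θ) * (1 + l) ^ (θ - 1) - (l - μ)⁻¹ ≤
          a * (1 + l) ^ (-2 : ℝ) := by
        have hratio : ((l - μ) / (1 + l)) ^ (1 - θ) ≤ (l - μ) / (1 + l) :=
          ratio_pow_le (by linarith) (by linarith) hu0 huv
        have hform : (l - μ) ^ (-θ) * (1 + l) ^ (θ - 1) =
            (l - μ)⁻¹ * ((l - μ) / (1 + l)) ^ (1 - θ) := by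
          rw [Real.div_rpow hv0.le hu0.le]
          have e' : (1 + l) ^ (θ - 1) = ((1 + l) ^ (1 - θ))⁻¹ := by
            rw [← Real.rpow_neg hu0.le, show -(1 - θ) = θ - 1 by ring]
          have e'' : (l - μ) ^ (-θ) = (l - μ)⁻¹ * (l - μ) ^ (1 - θ) := by
            rw [← Real.rpow_neg_one (l - μ), ← Real.rpow_add hv0,
              show -1 + (1 - θ) = -θ by ring]
          rw [e', e'']
          ring
        rw [hform]
        have step1 : (l - μ)⁻¹ * ((l - μ) / (1 + l)) ^ (1 - θ) - (l - μ)⁻¹ ≤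
            (l - μ)⁻¹ * ((l - μ) / (1 + l) - 1) := by
          have := mul_le_mul_of_nonneg_left hratio (inv_nonneg.2 hv0.le)
          linarith
        apply step1.trans
        have e3 : (l - μ) / (1 + l) - 1 = a / (1 + l) := by
          rw [div_sub_one (ne_of_gt hu0)]
          congr 1
          rw [ha]; ring
        rw [e3]
        have e4 : (l - μ)⁻¹ * (a / (1 + l)) ≤ (1 + l)⁻¹ * (a / (1 + l)) := by
          apply mul_le_mul_of_nonneg_right (inv_anti₀ hu0 huv)
          positivity
        apply e4.trans
        have e6 : (1 + l) ^ (-2 : ℝ) = (1 + l)⁻¹ * (1 + l)⁻¹ := by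
          rw [show (-2 : ℝ) = -1 + -1 by norm_num, Real.rpow_add hu0, Real.rpow_neg_one]
        rw [e6, div_eq_mul_inv]
        exact le_of_eq (by ring)
      have hch : |(1 - l) ^ (θ - 1) - 2 ^ (θ - 1)| ≤ 1 + l := by
        have hc := chord (θ := θ) (x := 1 - l) (by linarith) (by linarith)
          (by linarith) (by linarith)
        rw [show 2 - (1 - l) = 1 + l by ring] at hc
        exact hc
      have hsplit : (l - μ) ^ (-θ) * (1 - l ^ 2) ^ (θ - 1) - 2 ^ (θ - 1) * (l - μ)⁻¹ =
          (1 - l) ^ (θ - 1) * ((l - μ) ^ (-θ) * (1 + l) ^ (θ - 1) - (l - μ)⁻¹) +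
            ((1 - l) ^ (θ - 1) - 2 ^ (θ - 1)) * (l - μ)⁻¹ := by
        rw [expand_sq (by linarith) (by linarith)]
        ring
      rw [hsplit]
      have e1 : (1 - l) ^ (θ - 1) ≤ 1 :=
        Real.rpow_le_one_of_one_le_of_nonpos (by linarith) (by linarith)
      have t1 : |(1 - l) ^ (θ - 1) * ((l - μ) ^ (-θ) * (1 + l) ^ (θ - 1) - (l - μ)⁻¹)| ≤
          a * (1 + l) ^ (-2 : ℝ) := by
        rw [abs_of_nonneg (mul_nonneg (Real.rpow_nonneg (by linarith) _) (by linarith))]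
        calc (1 - l) ^ (θ - 1) * ((l - μ) ^ (-θ) * (1 + l) ^ (θ - 1) - (l - μ)⁻¹)
            ≤ 1 * (a * (1 + l) ^ (-2 : ℝ)) := mul_le_mul e1 hd2 (by linarith) (by norm_num)
          _ = a * (1 + l) ^ (-2 : ℝ) := by ring
      have t2 : |((1 - l) ^ (θ - 1) - 2 ^ (θ - 1)) * (l - μ)⁻¹| ≤ 1 := by
        rw [abs_mul, abs_of_nonneg (inv_nonneg.2 hv0.le)]
        calc |(1 - l) ^ (θ - 1) - 2 ^ (θ - 1)| * (l - μ)⁻¹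
            ≤ (1 + l) * (l - μ)⁻¹ := mul_le_mul_of_nonneg_right hch (inv_nonneg.2 hv0.le)
          _ ≤ (l - μ) * (l - μ)⁻¹ := mul_le_mul_of_nonneg_right huv (inv_nonneg.2 hv0.le)
          _ = 1 := mul_inv_cancel₀ (ne_of_gt hv0)
      calc |(1 - l) ^ (θ - 1) * ((l - μ) ^ (-θ) * (1 + l) ^ (θ - 1) - (l - μ)⁻¹) +
            ((1 - l) ^ (θ - 1) - 2 ^ (θ - 1)) * (l - μ)⁻¹|
          ≤ |(1 - l) ^ (θ - 1) * ((l - μ) ^ (-θ) * (1 + l) ^ (θ - 1) - (l - μ)⁻¹)| +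
            |((1 - l) ^ (θ - 1) - 2 ^ (θ - 1)) * (l - μ)⁻¹| := abs_add_le _ _
        _ ≤ a * (1 + l) ^ (-2 : ℝ) + 1 := add_le_add t1 t2
        _ = a * (l - (-1)) ^ (-2 : ℝ) + 1 := by rw [show l - (-1) = 1 + l by ring]
    have hφint : ∫ l in Ioo m 0, (a * (l - (-1)) ^ (-2 : ℝ) + 1) ≤ 2 := by
      have h1' : ∫ l in Ioo m 0, (a * (l - (-1)) ^ (-2 : ℝ) + 1) =
          a * (∫ l in Ioo m 0, (l - (-1)) ^ (-2 : ℝ)) + ∫ l in Ioo m 0, (1 : ℝ) := by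
        rw [MeasureTheory.integral_add ((intOn_invsq_sub hm1 hm0.le).const_mul a)
          (integrableOn_const measure_Ioo_lt_top.ne)]
        rw [MeasureTheory.integral_const_mul]
      rw [h1', int_invsq_sub hm1 hm0.le]
      have hvol : ∫ l in Ioo m 0, (1 : ℝ) = -m := by
        rw [setIntegral_const, Real.volume_real_Ioo_of_le (by linarith), smul_eq_mul, mul_one]
        ring
      rw [hvol, show m - (-1) = a by rw [hm]; ring]
      have : a * (a⁻¹ - (0 - (-1))⁻¹) = 1 - a := by
        rw [show (0:ℝ) - (-1) = 1 by ring]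
        field_simp
      rw [this]
      have hma : m = a - 1 := by rw [hm]; ring
      linarith
    have hdiff : (∫ l in Ioo m 0, (l - μ) ^ (-θ) * (1 - l ^ 2) ^ (θ - 1)) -
        (∫ l in Ioo m 0, 2 ^ (θ - 1) * (l - μ)⁻¹) =
        ∫ l in Ioo m 0, ((l - μ) ^ (-θ) * (1 - l ^ 2) ^ (θ - 1) -
          2 ^ (θ - 1) * (l - μ)⁻¹) :=
      (MeasureTheory.integral_sub Ifb Igb).symm
    rw [hdiff]
    have habs : |∫ l in Ioo m 0, ((l - μ) ^ (-θ) * (1 - l ^ 2) ^ (θ - 1) -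
        2 ^ (θ - 1) * (l - μ)⁻¹)| ≤
        ∫ l in Ioo m 0, |(l - μ) ^ (-θ) * (1 - l ^ 2) ^ (θ - 1) -
          2 ^ (θ - 1) * (l - μ)⁻¹| := by
      have := MeasureTheory.norm_integral_le_integral_norm (μ := volume.restrict (Ioo m 0))
        (f := fun l => (l - μ) ^ (-θ) * (1 - l ^ 2) ^ (θ - 1) - 2 ^ (θ - 1) * (l - μ)⁻¹)
      simpa [Real.norm_eq_abs] using this
    apply habs.trans
    exact (setIntegral_mono_on ((Ifb.sub Igb).abs) Iφ measurableSet_Ioo hptw).trans hφint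
  -- Piece C : on (0, 1)
  have hC : ∫ l in Ioo (0:ℝ) 1, (l - μ) ^ (-θ) * (1 - l ^ 2) ^ (θ - 1) ≤ 2 / θ := by
    have hb : IntegrableOn (fun l : ℝ => 2 * (1 - l) ^ (θ - 1)) (Ioo (0 : ℝ) 1) :=
      (intOn_rpow_sub' (by norm_num) le_rfl (by linarith)).const_mul _
    have hmono := setIntegral_mono_on Ifr hb measurableSet_Ioo ?_
    · calc ∫ l in Ioo (0:ℝ) 1, (l - μ) ^ (-θ) * (1 - l ^ 2) ^ (θ - 1)
          ≤ ∫ l in Ioo (0:ℝ) 1, 2 * (1 - l) ^ (θ - 1) := hmono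
        _ = 2 * ∫ l in Ioo (0:ℝ) 1, (1 - l) ^ (θ - 1) := MeasureTheory.integral_const_mul _ _
        _ = 2 * (((1 - 0) ^ (θ - 1 + 1) - (1 - 1) ^ (θ - 1 + 1)) / (θ - 1 + 1)) := by
            rw [int_rpow_sub' (by norm_num) (by linarith)]
        _ = 2 / θ := by
            rw [show (1:ℝ) - 0 = 1 by ring, Real.one_rpow, sub_self,
              Real.zero_rpow (by intro h; rw [show θ - 1 + 1 = θ by ring] at h; linarith),
              show θ - 1 + 1 = θ by ring]
            ring
    · intro l hl
      have hl1 := hl.1; have hl2 := hl.2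
      have e0 : (l - μ) ^ (-θ) ≤ 2 := by
        have h' : (l - μ) ^ (-θ) ≤ ((1:ℝ)/2) ^ (-θ) :=
          Real.rpow_le_rpow_of_nonpos (by norm_num) (by linarith) (by linarith)
        apply h'.trans
        rw [show (1/2:ℝ) = 2⁻¹ by norm_num, Real.inv_rpow (by norm_num),
          ← Real.rpow_neg (by norm_num), neg_neg]
        calc (2:ℝ) ^ θ ≤ (2:ℝ) ^ (1:ℝ) :=
              Real.rpow_le_rpow_of_exponent_le (by norm_num) (by linarith)
          _ = 2 := Real.rpow_one 2
      have e1 : (1 + l) ^ (θ - 1) ≤ 1 :=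
        Real.rpow_le_one_of_one_le_of_nonpos (by linarith) (by linarith)
      calc (l - μ) ^ (-θ) * (1 - l ^ 2) ^ (θ - 1)
          = (l - μ) ^ (-θ) * (1 + l) ^ (θ - 1) * (1 - l) ^ (θ - 1) := by
            rw [expand_sq (by linarith) (by linarith)]; ring
        _ ≤ 2 * 1 * (1 - l) ^ (θ - 1) := by
            apply mul_le_mul_of_nonneg_right ?_ (Real.rpow_nonneg (by linarith) _)
            exact mul_le_mul e0 e1 (Real.rpow_nonneg (by linarith) _) (by norm_num)
        _ = 2 * (1 - l) ^ (θ - 1) := by ring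
  have hC0 : 0 ≤ ∫ l in Ioo (0:ℝ) 1, (l - μ) ^ (-θ) * (1 - l ^ 2) ^ (θ - 1) := by
    apply setIntegral_nonneg measurableSet_Ioo
    intro l hl
    have hl1 := hl.1; have hl2 := hl.2
    apply mul_nonneg (Real.rpow_nonneg (by linarith) _) (Real.rpow_nonneg (by nlinarith) _)
  -- assembly
  have habsa : |1 + μ| = a := by
    rw [abs_of_neg (by linarith : 1 + μ < 0), ha]
    ring
  have hofs : abs (2 ^ (θ - 1) * Real.log (1 + a)) ≤ Real.log 2 := by
    have hc1 : (0:ℝ) < 2 ^ (θ - 1) := Real.rpow_pos_of_pos (by norm_num) _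
    have hc2 : (2:ℝ) ^ (θ - 1) ≤ 1 :=
      Real.rpow_le_one_of_one_le_of_nonpos (by norm_num) (by linarith)
    have hl1 : 0 ≤ Real.log (1 + a) := Real.log_nonneg (by linarith)
    have hl2 : Real.log (1 + a) ≤ Real.log 2 := Real.log_le_log (by linarith) (by linarith)
    rw [abs_mul, abs_of_pos hc1, abs_of_nonneg hl1]
    nlinarith
  have hkey : (∫ l in Ioo (-1 : ℝ) 1, (l - μ) ^ (-θ) * (1 - l ^ 2) ^ (θ - 1)) +
      2 ^ (θ - 1) * Real.log (|1 + μ|) =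
      ((∫ l in Ioo (-1 : ℝ) m, (l - μ) ^ (-θ) * (1 - l ^ 2) ^ (θ - 1)) -
        ∫ l in Ioo (-1 : ℝ) m, 2 ^ (θ - 1) * (l - μ)⁻¹) +
      ((∫ l in Ioo m 0, (l - μ) ^ (-θ) * (1 - l ^ 2) ^ (θ - 1)) -
        ∫ l in Ioo m 0, 2 ^ (θ - 1) * (l - μ)⁻¹) +
      (∫ l in Ioo (0:ℝ) 1, (l - μ) ^ (-θ) * (1 - l ^ 2) ^ (θ - 1)) +
      2 ^ (θ - 1) * Real.log (1 + a) := by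
    rw [habsa]
    have h5 : 2 ^ (θ - 1) * Real.log a =
        2 ^ (θ - 1) * Real.log (1 + a) - ∫ l in Ioo (-1 : ℝ) 0, 2 ^ (θ - 1) * (l - μ)⁻¹ := by
      rw [hglog]; ring
    rw [h5, hsum, hfsum, hgsum]
    ring
  rw [hkey]
  have hlast : abs ((∫ l in Ioo (0:ℝ) 1, (l - μ) ^ (-θ) * (1 - l ^ 2) ^ (θ - 1))) ≤ 2 / θ := by
    rw [abs_of_nonneg hC0]; exact hC
  calc abs (((∫ l in Ioo (-1 : ℝ) m, (l - μ) ^ (-θ) * (1 - l ^ 2) ^ (θ - 1)) -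
        ∫ l in Ioo (-1 : ℝ) m, 2 ^ (θ - 1) * (l - μ)⁻¹) +
      ((∫ l in Ioo m 0, (l - μ) ^ (-θ) * (1 - l ^ 2) ^ (θ - 1)) -
        ∫ l in Ioo m 0, 2 ^ (θ - 1) * (l - μ)⁻¹) +
      (∫ l in Ioo (0:ℝ) 1, (l - μ) ^ (-θ) * (1 - l ^ 2) ^ (θ - 1)) +
      2 ^ (θ - 1) * Real.log (1 + a))
      ≤ abs (((∫ l in Ioo (-1 : ℝ) m, (l - μ) ^ (-θ) * (1 - l ^ 2) ^ (θ - 1)) -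
        ∫ l in Ioo (-1 : ℝ) m, 2 ^ (θ - 1) * (l - μ)⁻¹) +
      ((∫ l in Ioo m 0, (l - μ) ^ (-θ) * (1 - l ^ 2) ^ (θ - 1)) -
        ∫ l in Ioo m 0, 2 ^ (θ - 1) * (l - μ)⁻¹) +
      (∫ l in Ioo (0:ℝ) 1, (l - μ) ^ (-θ) * (1 - l ^ 2) ^ (θ - 1))) +
      abs (2 ^ (θ - 1) * Real.log (1 + a)) := abs_add_le _ _
    _ ≤ (abs (((∫ l in Ioo (-1 : ℝ) m, (l - μ) ^ (-θ) * (1 - l ^ 2) ^ (θ - 1)) -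
        ∫ l in Ioo (-1 : ℝ) m, 2 ^ (θ - 1) * (l - μ)⁻¹) +
      ((∫ l in Ioo m 0, (l - μ) ^ (-θ) * (1 - l ^ 2) ^ (θ - 1)) -
        ∫ l in Ioo m 0, 2 ^ (θ - 1) * (l - μ)⁻¹)) +
      abs ((∫ l in Ioo (0:ℝ) 1, (l - μ) ^ (-θ) * (1 - l ^ 2) ^ (θ - 1)))) +
      abs (2 ^ (θ - 1) * Real.log (1 + a)) := by
        apply add_le_add_left (abs_add_le _ _)
    _ ≤ 3 / θ + 2 * Real.log 2 + 2 := by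
        have h6 := abs_add_le (((∫ l in Ioo (-1 : ℝ) m, (l - μ) ^ (-θ) * (1 - l ^ 2) ^ (θ - 1)) -
          ∫ l in Ioo (-1 : ℝ) m, 2 ^ (θ - 1) * (l - μ)⁻¹))
          (((∫ l in Ioo m 0, (l - μ) ^ (-θ) * (1 - l ^ 2) ^ (θ - 1)) -
          ∫ l in Ioo m 0, 2 ^ (θ - 1) * (l - μ)⁻¹))
        have h7 : 1 / θ + 2 / θ = 3 / θ := by ring
        linarith [hA, hB, hlast, hofs, h6, h7]

-- μ = -1 : the integrand is not integrable, so the Bochner integral is 0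
lemma caseNeg1 {θ : ℝ} (hθ1 : 1/2 ≤ θ) (hθ2 : θ < 1) :
    ∫ l in Ioo (-1 : ℝ) 1, (l - (-1 : ℝ)) ^ (-θ) * (1 - l ^ 2) ^ (θ - 1) = 0 := by
  apply MeasureTheory.integral_undef
  intro hint
  have hint' : IntegrableOn (fun l : ℝ => (l - (-1 : ℝ)) ^ (-θ) * (1 - l ^ 2) ^ (θ - 1))
      (Ioo (-1 : ℝ) 0) := by
    have : IntegrableOn (fun l : ℝ => (l - (-1 : ℝ)) ^ (-θ) * (1 - l ^ 2) ^ (θ - 1))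
        (Ioo (-1 : ℝ) 1) := hint
    exact this.mono_set (Ioo_subset_Ioo le_rfl (by norm_num))
  have hbad : IntegrableOn (fun l : ℝ => (l - (-1 : ℝ))⁻¹) (Ioo (-1 : ℝ) 0) := by
    apply Integrable.mono' ((hint'.const_mul 2))
      ((measurable_id.add_const 1).inv.aestronglyMeasurable.congr ?_)
    · rw [MeasureTheory.ae_restrict_iff' measurableSet_Ioo]
      filter_upwards with l hl
      have hl1 := hl.1; have hl2 := hl.2
      have hu0 : (0:ℝ) < 1 + l := by linarith
      have hfeq : (l - (-1 : ℝ)) ^ (-θ) * (1 - l ^ 2) ^ (θ - 1) =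
          (1 + l)⁻¹ * (1 - l) ^ (θ - 1) := by
        rw [expand_sq (by linarith) (by linarith), show l - (-1 : ℝ) = 1 + l by ring]
        calc (1 + l) ^ (-θ) * ((1 - l) ^ (θ - 1) * (1 + l) ^ (θ - 1))
            = ((1 + l) ^ (-θ) * (1 + l) ^ (θ - 1)) * (1 - l) ^ (θ - 1) := by ring
          _ = (1 + l)⁻¹ * (1 - l) ^ (θ - 1) := by
              rw [← Real.rpow_add hu0, show -θ + (θ - 1) = -1 by ring, Real.rpow_neg_one]
      have hge : 1/2 ≤ (1 - l) ^ (θ - 1) := by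
        have e1 : (2:ℝ) ^ (θ - 1) ≤ (1 - l) ^ (θ - 1) :=
          Real.rpow_le_rpow_of_nonpos (by linarith) (by linarith) (by linarith)
        have e2 : ((2:ℝ)) ^ (-1 : ℝ) ≤ (2:ℝ) ^ (θ - 1) :=
          Real.rpow_le_rpow_of_exponent_le (by norm_num) (by linarith)
        rw [Real.rpow_neg_one] at e2
        have : ((2:ℝ))⁻¹ = 1/2 := by norm_num
        linarith
      rw [show l - (-1 : ℝ) = 1 + l by ring] at hfeq
      rw [Real.norm_eq_abs, show l - (-1 : ℝ) = 1 + l by ring,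
        abs_of_nonneg (inv_nonneg.2 hu0.le), hfeq]
      have : (1 + l)⁻¹ * (1/2) ≤ (1 + l)⁻¹ * (1 - l) ^ (θ - 1) :=
        mul_le_mul_of_nonneg_left hge (inv_nonneg.2 hu0.le)
      linarith
    · filter_upwards with l
      show (l + 1)⁻¹ = (l - (-1 : ℝ))⁻¹
      norm_num
  have : IntervalIntegrable (fun l : ℝ => (l - (-1 : ℝ))⁻¹) volume (-1) 0 :=
    (intervalIntegrable_iff_integrableOn_Ioo_of_le (by norm_num)).mpr hbad
  rw [intervalIntegrable_sub_inv_iff] at this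
  rcases this with h | h
  · norm_num at h
  · apply h
    rw [Set.uIcc_of_le (by norm_num : (-1:ℝ) ≤ 0)]
    constructor <;> norm_num

/-- Logarithmic behaviour of `I_A` near `μ = -1` for `A ∈ [2,3)`, `θ = (A-1)/2`:
there is a constant `C₀` with `I_A(μ) - C₀ ln|1+μ|` uniformly bounded on
`(-2, 1)`. -/
theorem stmt11 (A θ : ℝ) (hA1 : 2 ≤ A) (hA2 : A < 3) (hθ : θ = (A - 1) / 2)
    (IA : ℝ → ℝ)
    (hIA : ∀ μ : ℝ, IA μ =
      if -1 < μ then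
        (2 : ℝ) ^ (-θ) / (Real.Gamma θ * Real.Gamma (1 - θ)) *
          ∫ l in Set.Ioo μ 1, (l - μ) ^ (-θ) * (1 - l ^ 2) ^ (θ - 1)
      else
        (2 : ℝ) ^ (-θ) / (Real.Gamma θ * Real.Gamma (1 - θ)) *
          ∫ l in Set.Ioo (-1 : ℝ) 1, (l - μ) ^ (-θ) * (1 - l ^ 2) ^ (θ - 1)) :
    ∃ C₀ C : ℝ, 0 ≤ C ∧
      ∀ μ ∈ Set.Ioo (-2 : ℝ) 1, |IA μ - C₀ * Real.log (|1 + μ|)| ≤ C := by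
  have hθ1 : 1/2 ≤ θ := by rw [hθ]; linarith
  have hθ2 : θ < 1 := by rw [hθ]; linarith
  have hθ0 : 0 < θ := by linarith
  have hθ1' : 0 < 1 - θ := by linarith
  have hΓ1 : 0 < Real.Gamma θ := Real.Gamma_pos_of_pos hθ0
  have hΓ2 : 0 < Real.Gamma (1 - θ) := Real.Gamma_pos_of_pos (by linarith)
  obtain ⟨K, hK⟩ : ∃ K : ℝ, K = (2 : ℝ) ^ (-θ) / (Real.Gamma θ * Real.Gamma (1 - θ)) := ⟨_, rfl⟩
  have hK0 : 0 < K := by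
    rw [hK]
    exact div_pos (Real.rpow_pos_of_pos two_pos _) (mul_pos hΓ1 hΓ2)
  obtain ⟨B, hB⟩ : ∃ B : ℝ, B = (2/(1-θ) + 1/θ + Real.log 2) +
      (1/(1-θ) + Real.log 2 + 2 + 2/θ) + (3/θ + 2*Real.log 2 + 2) + (4/θ + Real.log 2) :=
    ⟨_, rfl⟩
  have hlog2 : (0:ℝ) ≤ Real.log 2 := Real.log_nonneg (by norm_num)
  have hinv1 : (0:ℝ) < 1/θ := by positivity
  have hinv2 : (0:ℝ) < 1/(1-θ) := by positivity
  have hinv3 : (0:ℝ) < 2/θ := by positivity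
  have hinv4 : (0:ℝ) < 2/(1-θ) := by positivity
  have hinv5 : (0:ℝ) < 3/θ := by positivity
  have hinv6 : (0:ℝ) < 4/θ := by positivity
  have hB0 : 0 ≤ B := by rw [hB]; linarith
  refine ⟨-(K * 2 ^ (θ - 1)), K * B, mul_nonneg hK0.le hB0, ?_⟩
  intro μ hμ
  obtain ⟨hμ1, hμ2⟩ := hμ
  rw [hIA μ]
  by_cases hcase : -1 < μ
  · rw [if_pos hcase, ← hK]
    have hexp : K * (∫ l in Set.Ioo μ 1, (l - μ) ^ (-θ) * (1 - l ^ 2) ^ (θ - 1)) -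
        -(K * 2 ^ (θ - 1)) * Real.log (|1 + μ|) =
        K * ((∫ l in Set.Ioo μ 1, (l - μ) ^ (-θ) * (1 - l ^ 2) ^ (θ - 1)) +
          2 ^ (θ - 1) * Real.log (|1 + μ|)) := by ring
    rw [hexp, abs_mul, abs_of_pos hK0]
    apply mul_le_mul_of_nonneg_left ?_ hK0.le
    by_cases h12 : μ < -(1/2)
    · have h := case2 hθ1 hθ2 hcase h12
      apply h.trans
      rw [hB]; linarith
    · push_neg at h12
      have h := case1 hθ1 hθ2 h12 hμ2
      apply h.trans
      rw [hB]; linarith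
  · rw [if_neg hcase, ← hK]
    push_neg at hcase
    by_cases heq : μ = -1
    · subst heq
      rw [caseNeg1 hθ1 hθ2]
      norm_num
      exact mul_nonneg hK0.le hB0
    · have hlt : μ < -1 := lt_of_le_of_ne hcase heq
      have hexp : K * (∫ l in Set.Ioo (-1:ℝ) 1, (l - μ) ^ (-θ) * (1 - l ^ 2) ^ (θ - 1)) -
          -(K * 2 ^ (θ - 1)) * Real.log (|1 + μ|) =
          K * ((∫ l in Set.Ioo (-1:ℝ) 1, (l - μ) ^ (-θ) * (1 - l ^ 2) ^ (θ - 1)) +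
            2 ^ (θ - 1) * Real.log (|1 + μ|)) := by ring
      rw [hexp, abs_mul, abs_of_pos hK0]
      apply mul_le_mul_of_nonneg_left ?_ hK0.le
      by_cases h32 : -(3/2) < μ
      · have h := case3 hθ1 hθ2 h32 hlt
        apply h.trans
        rw [hB]; linarith
      · push_neg at h32
        have h := case4 hθ1 hθ2 hμ1 h32
        apply h.trans
        rw [hB]; linarith
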